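/- If 2 < a < b, then the set of codewords of C₀(a,b) of Hamming weight exactly b which are not sums of elementary column matrices is precisely the set {r_1, …, r_a} of elementary row matrices. -/

import Mathlib

/-- The elementary row matrix `r_i`: 1's exactly in row `i`. -/
def rowMat (a b : ℕ) (i : Fin a) : Matrix (Fin a) (Fin b) (ZMod 2) :=
  fun i' _ => if i' = i then 1 else 0

/-- The elementary column matrix `c_j`: 1's exactly in column `j`. -/
def colMat (a b : ℕ) (j : Fin b) : Matrix (Fin a) (Fin b) (ZMod 2) :=
  fun _ j' => if j' = j then 1 else 0

/-- The code `C₀(a,b)`, spanned by the elementary row and column matrices. -/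
def C0 (a b : ℕ) : Submodule (ZMod 2) (Matrix (Fin a) (Fin b) (ZMod 2)) :=
  Submodule.span (ZMod 2) (Set.range (rowMat a b) ∪ Set.range (colMat a b))

/-- The Hamming weight of a matrix: the number of nonzero entries. -/
def wt {a b : ℕ} (M : Matrix (Fin a) (Fin b) (ZMod 2)) : ℕ :=
  (Finset.univ.filter fun p : Fin a × Fin b => M p.1 p.2 ≠ 0).card

lemma mem_C0_iff {a b : ℕ} (v : Matrix (Fin a) (Fin b) (ZMod 2)) :
    v ∈ C0 a b ↔ ∃ x : Fin a → ZMod 2, ∃ y : Fin b → ZMod 2,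
      ∀ i j, v i j = x i + y j := by
  constructor
  · intro hv
    induction hv using Submodule.span_induction with
    | mem w hw =>
      rcases hw with ⟨i, rfl⟩ | ⟨j, rfl⟩
      · exact ⟨fun i' => if i' = i then 1 else 0, 0, fun i' j => by simp [rowMat]⟩
      · exact ⟨0, fun j' => if j' = j then 1 else 0, fun i j' => by simp [colMat]⟩
    | zero => exact ⟨0, 0, by simp [Matrix.zero_apply]⟩
    | add u w _ _ hu hw =>
      obtain ⟨x, y, h1⟩ := hu; obtain ⟨x', y', h2⟩ := hw
      exact ⟨x + x', y + y', fun i j => by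
        simp only [Matrix.add_apply, h1, h2, Pi.add_apply]; ring⟩
    | smul c u _ hu =>
      obtain ⟨x, y, h⟩ := hu
      exact ⟨c • x, c • y, fun i j => by
        simp only [Matrix.smul_apply, h, Pi.smul_apply, smul_eq_mul]; ring⟩
  · rintro ⟨x, y, h⟩
    have hv : v = (∑ i, x i • rowMat a b i) + (∑ j, y j • colMat a b j) := by
      funext i j
      simp only [Matrix.add_apply, Matrix.sum_apply, Matrix.smul_apply, rowMat, colMat,
        smul_eq_mul, mul_ite, mul_one, mul_zero, Finset.sum_ite_eq, Finset.sum_ite_eq',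
        Finset.mem_univ, if_true, h i j]
    rw [hv]
    exact Submodule.add_mem _
      (Submodule.sum_mem _ fun i _ => Submodule.smul_mem _ _
        (Submodule.subset_span (Or.inl ⟨i, rfl⟩)))
      (Submodule.sum_mem _ fun j _ => Submodule.smul_mem _ _
        (Submodule.subset_span (Or.inr ⟨j, rfl⟩)))

lemma wt_eq' {a b : ℕ} (x : Fin a → ZMod 2) (y : Fin b → ZMod 2) :
    wt (fun i j => x i + y j) =
      (Finset.univ.filter fun i => x i = 1).card *
        (b - (Finset.univ.filter fun j => y j = 1).card)
      + (a - (Finset.univ.filter fun i => x i = 1).card) *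
        (Finset.univ.filter fun j => y j = 1).card := by
  classical
  set A : Finset (Fin a) := Finset.univ.filter fun i => x i = 1 with hA
  set B : Finset (Fin b) := Finset.univ.filter fun j => y j = 1 with hB
  have key : (Finset.univ.filter fun p : Fin a × Fin b => (x p.1 + y p.2) ≠ 0)
      = (A ×ˢ Bᶜ) ∪ (Aᶜ ×ˢ B) := by
    ext p
    have : ∀ u w : ZMod 2, (u + w ≠ 0) ↔ ((u = 1 ∧ ¬ w = 1) ∨ (¬ u = 1 ∧ w = 1)) := by decide
    simp [hA, hB, Finset.mem_filter, Finset.mem_product, Finset.mem_compl, this]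
  have hdisj : Disjoint (A ×ˢ Bᶜ) (Aᶜ ×ˢ B) := by
    rw [Finset.disjoint_left]
    rintro p hp hq
    simp only [Finset.mem_product, Finset.mem_compl] at hp hq
    exact hq.1 hp.1
  unfold wt
  rw [key, Finset.card_union_of_disjoint hdisj, Finset.card_product, Finset.card_product,
    Finset.card_compl, Finset.card_compl, Fintype.card_fin, Fintype.card_fin]

lemma arith {a b s t : ℕ} (ha : 2 < a) (hab : a < b) (hs : s ≤ a) (ht : t ≤ b)
    (h : s * (b - t) + (a - s) * t = b) (hs0 : s ≠ 0) (hsa : s ≠ a) :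
    (s = 1 ∧ t = 0) ∨ (s = a - 1 ∧ t = b) := by
  have key : (s : ℤ) * ((b : ℤ) - t) + ((a : ℤ) - s) * t = b := by
    have h1 : (s : ℤ) * ((b : ℤ) - t) = (s : ℕ) * ((b - t : ℕ) : ℤ) := by
      rw [Nat.cast_sub ht]
    have h2 : ((a : ℤ) - s) * t = ((a - s : ℕ) : ℤ) * t := by
      rw [Nat.cast_sub hs]
    rw [h1, h2]
    exact_mod_cast congrArg (Nat.cast : ℕ → ℤ) h
  have hkey : ((s : ℤ) - 1) * b = t * (2 * s - a) := by nlinarith [key]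
  have haZ : (2 : ℤ) < a := by exact_mod_cast ha
  have habZ : (a : ℤ) < b := by exact_mod_cast hab
  have htZ : (t : ℤ) ≤ b := by exact_mod_cast ht
  have htpos : (0 : ℤ) ≤ t := by positivity
  rcases eq_or_lt_of_le (Nat.one_le_iff_ne_zero.mpr hs0) with h1 | h1
  · left
    have hs1 : s = 1 := h1.symm
    subst hs1
    have h0 : (t : ℤ) * (2 - a) = 0 := by push_cast at hkey ⊢; linarith
    have ht0 : (t : ℤ) = 0 := by
      rcases mul_eq_zero.mp h0 with h | h
      · exact h
      · exfalso; linarith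
    exact ⟨rfl, by exact_mod_cast ht0⟩
  · right
    have hs2 : (2 : ℤ) ≤ s := by exact_mod_cast h1
    have hbpos : (0 : ℤ) < b := by linarith
    have hL : (0 : ℤ) < ((s : ℤ) - 1) * b := by nlinarith
    have hR : (0 : ℤ) < (t : ℤ) * (2 * s - a) := hkey ▸ hL
    have h2sa : (0 : ℤ) < 2 * s - a := by nlinarith
    have htpos' : (0 : ℤ) < t := by nlinarith
    have hle : ((s : ℤ) - 1) * b ≤ (b : ℤ) * (2 * s - a) := by
      rw [hkey]; exact mul_le_mul_of_nonneg_right htZ (le_of_lt h2sa)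
    have hsge : (a : ℤ) - 1 ≤ s := by nlinarith
    have hsle : (s : ℤ) ≤ a - 1 := by
      have h' : s < a := lt_of_le_of_ne hs hsa
      have h'' : (s : ℤ) < a := by exact_mod_cast h'
      linarith
    have hseq : (s : ℤ) = a - 1 := le_antisymm hsle hsge
    have hsn : s = a - 1 := by omega
    refine ⟨hsn, ?_⟩
    have hteq : ((a : ℤ) - 2) * b = t * (a - 2) := by rw [hseq] at hkey; linarith [hkey]
    have hz : ((a : ℤ) - 2) * (b - t) = 0 := by linarith
    have htb : (t : ℤ) = b := by
      rcases mul_eq_zero.mp hz with h | h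
      · exfalso; linarith
      · linarith
    exact_mod_cast htb

lemma colSum_apply {a b : ℕ} (Y : Finset (Fin b)) (i : Fin a) (j : Fin b) :
    (∑ j' ∈ Y, colMat a b j') i j = if j ∈ Y then 1 else 0 := by
  simp [colMat, Matrix.sum_apply, Finset.sum_ite_eq']

theorem rowMatrices_characterisation (a b : ℕ) (ha : 2 < a) (hab : a < b) :
    ∀ v : Matrix (Fin a) (Fin b) (ZMod 2),
      (v ∈ C0 a b ∧ wt v = b ∧ ∀ Y : Finset (Fin b), v ≠ ∑ j ∈ Y, colMat a b j) ↔
        v ∈ Set.range (rowMat a b) := by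
  intro v
  have z2 : ∀ u : ZMod 2, u ≠ 1 → u = 0 := by decide
  constructor
  · rintro ⟨hv, hw, hY⟩
    obtain ⟨x, y, hxy⟩ := (mem_C0_iff v).mp hv
    have hveq : v = fun i j => x i + y j := by funext i j; exact hxy i j
    set A : Finset (Fin a) := Finset.univ.filter fun i => x i = 1 with hA
    set B : Finset (Fin b) := Finset.univ.filter fun j => y j = 1 with hB
    have hwt : A.card * (b - B.card) + (a - A.card) * B.card = b := by
      rw [hveq, wt_eq'] at hw
      exact hw
    have hs0 : A.card ≠ 0 := by
      intro h0
      have hAe : A = ∅ := Finset.card_eq_zero.mp h0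
      refine hY B ?_
      funext i j
      rw [colSum_apply]
      have hx : x i = 0 := by
        apply z2
        intro hx1
        have : i ∈ A := by simp [hA, hx1]
        simp [hAe] at this
      rw [hxy i j, hx, zero_add]
      by_cases hj : j ∈ B
      · have hy : y j = 1 := by simpa [hB] using hj
        rw [hy, if_pos hj]
      · have hne : y j ≠ 1 := fun h1 => hj (by simp [hB, h1])
        rw [z2 _ hne, if_neg hj]
    have hsa : A.card ≠ a := by
      intro hcard
      have hAu : A = Finset.univ := by
        apply Finset.eq_univ_of_card
        simp [hcard]
      refine hY Bᶜ ?_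
      funext i j
      rw [colSum_apply]
      have hx : x i = 1 := by
        have : i ∈ A := hAu ▸ Finset.mem_univ i
        simpa [hA] using this
      rw [hxy i j, hx]
      by_cases hj : j ∈ B
      · have hy : y j = 1 := by simpa [hB] using hj
        rw [hy]
        simp [Finset.mem_compl, hj]
        decide
      · have : y j ≠ 1 := by intro h1; exact hj (by simp [hB, h1])
        rw [z2 _ this]
        simp [Finset.mem_compl, hj]
    have hsle : A.card ≤ a := by simpa using Finset.card_le_univ A
    have htle : B.card ≤ b := by simpa using Finset.card_le_univ B
    rcases arith ha hab hsle htle hwt hs0 hsa with ⟨hs1, ht0⟩ | ⟨hs1, htb⟩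
    · obtain ⟨i₀, hAi⟩ := Finset.card_eq_one.mp hs1
      refine ⟨i₀, ?_⟩
      funext i j
      have hy : y j = 0 := by
        apply z2
        intro h1
        have : j ∈ B := by simp [hB, h1]
        rw [Finset.card_eq_zero.mp ht0] at this
        simp at this
      rw [rowMat]
      by_cases hi : i = i₀
      · have : i ∈ A := by rw [hi, hAi]; exact Finset.mem_singleton_self i₀
        have hx : x i = 1 := by simpa [hA] using this
        rw [hxy i j, hx, hy, add_zero]
        simp [hi]
      · have : i ∉ A := by rw [hAi]; simp [hi]
        have hx : x i = 0 := z2 _ (fun h1 => this (by simp [hA, h1]))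
        rw [hxy i j, hx, hy, add_zero]
        simp [hi]
    · have hAc : Aᶜ.card = 1 := by
        rw [Finset.card_compl, Fintype.card_fin, hs1]
        omega
      obtain ⟨i₀, hAi⟩ := Finset.card_eq_one.mp hAc
      refine ⟨i₀, ?_⟩
      funext i j
      have hy : y j = 1 := by
        have : j ∈ B := by
          have hBu : B = Finset.univ := Finset.eq_univ_of_card _ (by simp [htb])
          rw [hBu]; exact Finset.mem_univ j
        simpa [hB] using this
      rw [rowMat, hxy i j, hy]
      by_cases hi : i = i₀
      · have : i ∈ Aᶜ := by rw [hAi]; simp [hi]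
        have : i ∉ A := Finset.mem_compl.mp this
        have hx : x i = 0 := z2 _ (fun h1 => this (by simp [hA, h1]))
        rw [hx, zero_add]
        simp [hi]
      · have : i ∉ Aᶜ := by rw [hAi]; simp [hi]
        have : i ∈ A := by simpa using this
        have hx : x i = 1 := by simpa [hA] using this
        rw [hx]
        simp [hi]
        decide
  · rintro ⟨i, rfl⟩
    refine ⟨Submodule.subset_span (Or.inl ⟨i, rfl⟩), ?_, ?_⟩
    · rw [wt]
      have hset : (Finset.univ.filter fun p : Fin a × Fin b => rowMat a b i p.1 p.2 ≠ 0)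
          = ({i} : Finset (Fin a)) ×ˢ Finset.univ := by
        ext p
        simp only [Finset.mem_filter, Finset.mem_univ, true_and, Finset.mem_product,
          Finset.mem_singleton, rowMat, and_true]
        by_cases h : p.1 = i <;> simp_all
      rw [hset, Finset.card_product, Finset.card_singleton, Finset.card_univ,
        Fintype.card_fin, one_mul]
    · intro Y hYeq
      have hnt : Nontrivial (Fin a) := Fin.nontrivial_iff_two_le.mpr (by omega)
      obtain ⟨i', hi'⟩ := exists_ne i
      have hb0 : 0 < b := by omega
      set j0 : Fin b := ⟨0, hb0⟩
      have h1 : rowMat a b i i j0 = (∑ j ∈ Y, colMat a b j) i j0 := by rw [hYeq]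
      have h2 : rowMat a b i i' j0 = (∑ j ∈ Y, colMat a b j) i' j0 := by rw [hYeq]
      rw [colSum_apply] at h1 h2
      rw [rowMat] at h1 h2
      simp only [if_pos rfl] at h1
      simp only [if_neg hi'] at h2
      rw [← h2] at h1
      exact one_ne_zero h1
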